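/- Let α = 1.22 and β = 1/(2^α − 1). The function F(x, y) = 2β·x^α + y^α on the convex region {(x,y) ∈ [0,1]² : x + y ≤ 1, x ≤ 0.349} satisfies F(x,y) ≤ max(F(0,1), F(0.349, 0.651), F(0,0)) for all (x,y) in the region. -/

import Mathlib

/-- On the convex region `{(x,y) ∈ [0,1]² : x + y ≤ 1, x ≤ 0.349}`, the convex function
`F(x,y) = 2β x^α + y^α` (α = 1.22, β = 1/(2^α − 1)) is bounded by its maximum over the
extreme points `(0,1)`, `(0.349, 0.651)`, `(0,0)`. -/
theorem stmt6 (α β : ℝ) (hα : α = 1.22) (hβ : β = 1 / ((2 : ℝ) ^ α - 1))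
    (F : ℝ → ℝ → ℝ) (hF : ∀ x y : ℝ, F x y = 2 * β * x ^ α + y ^ α) :
    ∀ x y : ℝ, 0 ≤ x → 0 ≤ y → x ≤ 1 → y ≤ 1 → x + y ≤ 1 → x ≤ 0.349 →
      F x y ≤ max (max (F 0 1) (F 0.349 0.651)) (F 0 0) := by
  intro x y hx0 hy0 hx1 hy1 hxy hx349
  have hα1 : (1 : ℝ) ≤ α := by rw [hα]; norm_num
  have hα0 : (0 : ℝ) ≤ α := le_trans zero_le_one hα1
  have hβ0 : 0 ≤ 2 * β := by
    have h2 : (2:ℝ) ^ (1:ℝ) ≤ (2:ℝ) ^ α :=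
      Real.rpow_le_rpow_left_iff (by norm_num : (1:ℝ) < 2) |>.mpr hα1
    rw [Real.rpow_one] at h2
    have : (0:ℝ) < (2:ℝ) ^ α - 1 := by linarith
    rw [hβ]; positivity
  -- The 1D function
  set g : ℝ → ℝ := fun t => 2 * β * t ^ α + (1 - t) ^ α with hg
  -- convexity of g on Icc 0 1
  have hrpow : ConvexOn ℝ (Set.Ici (0:ℝ)) (fun t : ℝ => t ^ α) :=
    convexOn_rpow hα1
  have h1 : ConvexOn ℝ (Set.Icc (0:ℝ) 1) (fun t : ℝ => 2 * β * t ^ α) := by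
    have := (hrpow.subset (Set.Icc_subset_Ici_self) (convex_Icc 0 1)).smul hβ0
    simpa [smul_eq_mul] using this
  have h2 : ConvexOn ℝ (Set.Icc (0:ℝ) 1) (fun t : ℝ => (1 - t) ^ α) := by
    have haff : ConvexOn ℝ ((AffineMap.lineMap (1:ℝ) (0:ℝ)) ⁻¹' Set.Ici 0)
        ((fun t : ℝ => t ^ α) ∘ (AffineMap.lineMap (1:ℝ) (0:ℝ))) :=
      hrpow.comp_affineMap _
    have hsub : Set.Icc (0:ℝ) 1 ⊆ (AffineMap.lineMap (1:ℝ) (0:ℝ)) ⁻¹' Set.Ici 0 := by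
      intro t ht
      simp only [Set.mem_preimage, AffineMap.lineMap_apply_ring, Set.mem_Ici]
      rcases ht with ⟨h0, h1⟩
      nlinarith
    have := haff.subset hsub (convex_Icc 0 1)
    convert this using 2 with t
    · rfl
    · rfl
    simp [AffineMap.lineMap_apply_ring]
  have hgconv : ConvexOn ℝ (Set.Icc (0:ℝ) 1) g := h1.add h2
  -- x lies on segment [0, 0.349]
  have hseg : x ∈ segment ℝ (0:ℝ) (0.349:ℝ) := by
    rw [segment_eq_Icc (by norm_num : (0:ℝ) ≤ 0.349)]
    exact ⟨hx0, hx349⟩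
  have hmax : g x ≤ max (g 0) (g 0.349) :=
    hgconv.le_on_segment (by norm_num) (by norm_num) hseg
  -- F x y ≤ g x
  have hyle : y ≤ 1 - x := by linarith
  have hFg : F x y ≤ g x := by
    rw [hF]
    have : y ^ α ≤ (1 - x) ^ α := Real.rpow_le_rpow hy0 hyle hα0
    simp only [hg]
    linarith
  -- Evaluate g at endpoints
  have hαne : α ≠ 0 := by rw [hα]; norm_num
  have hg0 : g 0 = F 0 1 := by
    simp [hg, hF, Real.zero_rpow hαne, Real.one_rpow]
  have hg349 : g 0.349 = F 0.349 0.651 := by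
    simp only [hg]; rw [hF]; norm_num
  calc F x y ≤ g x := hFg
    _ ≤ max (g 0) (g 0.349) := hmax
    _ = max (F 0 1) (F 0.349 0.651) := by rw [hg0, hg349]
    _ ≤ max (max (F 0 1) (F 0.349 0.651)) (F 0 0) := le_max_left _ _
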